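/- Splitting by the well-known splitting property (list of two components): let P₁, P₂ be normal propositional programs such that no atom occurring in P₁ appears in the head of any rule of P₂ (P₂ does not redefine atoms of P₁). Then I is an answer set of P₁ ∪ P₂ if and only if there is an answer set J of P₁ such that I is an answer set of P₂ ∪ facts(J) with I ∩ Atoms(P₁) = J, where Atoms(P₁) is the set of atoms occurring in P₁. -/

import Mathlib

structure Rule (Atom : Type) where
  head : Atom
  pbody : Set Atom
  nbody : Set Atom

def satRule {Atom : Type} (I : Set Atom) (r : Rule Atom) : Prop :=
  r.pbody ⊆ I ∧ r.nbody ∩ I = ∅ → r.head ∈ I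

def isModel {Atom : Type} (I : Set Atom) (P : Set (Rule Atom)) : Prop :=
  ∀ r ∈ P, satRule I r

def reduct {Atom : Type} (P : Set (Rule Atom)) (I : Set Atom) : Set (Rule Atom) :=
  {r' | ∃ r ∈ P, r.nbody ∩ I = ∅ ∧ r' = Rule.mk r.head r.pbody ∅}

def isAnswerSet {Atom : Type} (P : Set (Rule Atom)) (I : Set Atom) : Prop :=
  isModel I (reduct P I) ∧ ∀ J, isModel J (reduct P I) → I ⊆ J

def facts {Atom : Type} (F : Set Atom) : Set (Rule Atom) :=
  {r | ∃ a ∈ F, r = Rule.mk a ∅ ∅}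

def ruleAtoms {Atom : Type} (r : Rule Atom) : Set Atom :=
  {r.head} ∪ r.pbody ∪ r.nbody

def progAtoms {Atom : Type} (P : Set (Rule Atom)) : Set Atom :=
  ⋃ r ∈ P, ruleAtoms r

lemma reduct_union {Atom : Type} (P Q : Set (Rule Atom)) (I : Set Atom) :
    reduct (P ∪ Q) I = reduct P I ∪ reduct Q I := by
  ext r'
  constructor
  · rintro ⟨r, hr | hr, hn, he⟩
    · exact Or.inl ⟨r, hr, hn, he⟩
    · exact Or.inr ⟨r, hr, hn, he⟩
  · rintro (⟨r, hr, hn, he⟩ | ⟨r, hr, hn, he⟩)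
    · exact ⟨r, Or.inl hr, hn, he⟩
    · exact ⟨r, Or.inr hr, hn, he⟩

lemma reduct_facts {Atom : Type} (F I : Set Atom) :
    reduct (facts F) I = facts F := by
  ext r'
  constructor
  · rintro ⟨r, ⟨a, ha, rfl⟩, hn, rfl⟩
    exact ⟨a, ha, rfl⟩
  · rintro ⟨a, ha, rfl⟩
    exact ⟨Rule.mk a ∅ ∅, ⟨a, ha, rfl⟩, Set.empty_inter I, rfl⟩

lemma isModel_union {Atom : Type} {I : Set Atom} {P Q : Set (Rule Atom)} :
    isModel I (P ∪ Q) ↔ isModel I P ∧ isModel I Q := by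
  constructor
  · intro hM
    exact ⟨fun r hr => hM r (Or.inl hr), fun r hr => hM r (Or.inr hr)⟩
  · rintro ⟨h1, h2⟩ r (hr | hr)
    · exact h1 r hr
    · exact h2 r hr

lemma atoms_sub {Atom : Type} {P : Set (Rule Atom)} {r : Rule Atom} (hr : r ∈ P) :
    r.head ∈ progAtoms P ∧ r.pbody ⊆ progAtoms P ∧ r.nbody ⊆ progAtoms P := by
  refine ⟨?_, ?_, ?_⟩
  · exact Set.mem_biUnion hr (Or.inl (Or.inl rfl))
  · exact fun a ha => Set.mem_biUnion hr (Or.inl (Or.inr ha))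
  · exact fun a ha => Set.mem_biUnion hr (Or.inr ha)

lemma reduct_restrict {Atom : Type} (P1 : Set (Rule Atom)) (I : Set Atom) :
    reduct P1 (I ∩ progAtoms P1) = reduct P1 I := by
  have key : ∀ r ∈ P1, r.nbody ∩ (I ∩ progAtoms P1) = r.nbody ∩ I := by
    intro r hr
    rw [Set.inter_comm I, ← Set.inter_assoc,
      Set.inter_eq_self_of_subset_left (atoms_sub hr).2.2]
  ext r'
  constructor
  · rintro ⟨r, hr, hn, he⟩
    exact ⟨r, hr, by rw [← key r hr]; exact hn, he⟩
  · rintro ⟨r, hr, hn, he⟩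
    exact ⟨r, hr, by rw [key r hr]; exact hn, he⟩

lemma facts_sub_of_model {Atom : Type} {F K : Set Atom} (hK : isModel K (facts F)) :
    F ⊆ K := by
  intro a ha
  have := hK (Rule.mk a ∅ ∅) ⟨a, ha, rfl⟩
  exact this ⟨Set.empty_subset K, Set.empty_inter K⟩

theorem stmt14 {Atom : Type} (P1 P2 : Set (Rule Atom))
    (h : ∀ r ∈ P2, r.head ∉ progAtoms P1) :
    ∀ I, isAnswerSet (P1 ∪ P2) I ↔
      ∃ J, isAnswerSet P1 J ∧ isAnswerSet (P2 ∪ facts J) I ∧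
        I ∩ progAtoms P1 = J := by
  intro I
  set A1 := progAtoms P1 with hA1
  constructor
  · rintro ⟨hMod, hMin⟩
    rw [reduct_union, isModel_union] at hMod
    obtain ⟨hM1, hM2⟩ := hMod
    refine ⟨I ∩ A1, ⟨?_, ?_⟩, ⟨?_, ?_⟩, rfl⟩
    · -- I ∩ A1 models reduct P1 (I ∩ A1)
      rw [reduct_restrict]
      rintro r' ⟨r, hr, hn, rfl⟩ ⟨hp, -⟩
      have hpI : r.pbody ⊆ I := hp.trans Set.inter_subset_left
      have hhead : r.head ∈ I := hM1 (Rule.mk r.head r.pbody ∅) ⟨r, hr, hn, rfl⟩ ⟨hpI, Set.empty_inter I⟩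
      exact ⟨hhead, (atoms_sub hr).1⟩
    · -- minimality of I ∩ A1
      intro K hK
      rw [reduct_restrict] at hK
      set M := I ∩ (K ∪ A1ᶜ) with hM
      have hMmod : isModel M (reduct (P1 ∪ P2) I) := by
        rw [reduct_union, isModel_union]
        constructor
        · rintro r' ⟨r, hr, hn, rfl⟩ ⟨hp, -⟩
          have hpI : r.pbody ⊆ I := hp.trans Set.inter_subset_left
          have hpK : r.pbody ⊆ K := by
            intro a ha
            rcases (hp ha).2 with hk | hc
            · exact hk
            · exact absurd ((atoms_sub hr).2.1 ha) hc
          have hhK : r.head ∈ K := hK (Rule.mk r.head r.pbody ∅) ⟨r, hr, hn, rfl⟩ ⟨hpK, Set.empty_inter K⟩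
          have hhI : r.head ∈ I := hM1 (Rule.mk r.head r.pbody ∅) ⟨r, hr, hn, rfl⟩ ⟨hpI, Set.empty_inter I⟩
          exact ⟨hhI, Or.inl hhK⟩
        · rintro r' ⟨r, hr, hn, rfl⟩ ⟨hp, -⟩
          have hpI : r.pbody ⊆ I := hp.trans Set.inter_subset_left
          have hhI : r.head ∈ I := hM2 (Rule.mk r.head r.pbody ∅) ⟨r, hr, hn, rfl⟩ ⟨hpI, Set.empty_inter I⟩
          exact ⟨hhI, Or.inr (h r hr)⟩
      have hIM : I ⊆ M := hMin M hMmod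
      rintro a ⟨haI, haA⟩
      rcases (hIM haI).2 with hk | hc
      · exact hk
      · exact absurd haA hc
    · -- I models reduct (P2 ∪ facts (I ∩ A1)) I
      rw [reduct_union, reduct_facts, isModel_union]
      refine ⟨hM2, ?_⟩
      rintro r ⟨a, ha, rfl⟩ -
      exact ha.1
    · -- minimality of I
      intro K hK
      rw [reduct_union, reduct_facts, isModel_union] at hK
      obtain ⟨hK2, hKf⟩ := hK
      have hJK : I ∩ A1 ⊆ K := facts_sub_of_model hKf
      set M := I ∩ (A1 ∪ K) with hM
      have hMmod : isModel M (reduct (P1 ∪ P2) I) := by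
        rw [reduct_union, isModel_union]
        constructor
        · rintro r' ⟨r, hr, hn, rfl⟩ ⟨hp, -⟩
          have hpI : r.pbody ⊆ I := hp.trans Set.inter_subset_left
          have hhI : r.head ∈ I := hM1 (Rule.mk r.head r.pbody ∅) ⟨r, hr, hn, rfl⟩ ⟨hpI, Set.empty_inter I⟩
          exact ⟨hhI, Or.inl (atoms_sub hr).1⟩
        · rintro r' ⟨r, hr, hn, rfl⟩ ⟨hp, -⟩
          have hpI : r.pbody ⊆ I := hp.trans Set.inter_subset_left
          have hhI : r.head ∈ I := hM2 (Rule.mk r.head r.pbody ∅) ⟨r, hr, hn, rfl⟩ ⟨hpI, Set.empty_inter I⟩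
          have hpK : r.pbody ⊆ K := by
            intro a ha
            rcases (hp ha).2 with hA | hk
            · exact hJK ⟨(hp ha).1, hA⟩
            · exact hk
          have hhK : r.head ∈ K := hK2 (Rule.mk r.head r.pbody ∅) ⟨r, hr, hn, rfl⟩ ⟨hpK, Set.empty_inter K⟩
          exact ⟨hhI, Or.inr hhK⟩
      have hIM : I ⊆ M := hMin M hMmod
      intro a haI
      rcases (hIM haI).2 with hA | hk
      · exact hJK ⟨haI, hA⟩
      · exact hk
  · rintro ⟨J, ⟨hJm, hJmin⟩, ⟨hIm, hImin⟩, hJI⟩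
    have hJsubI : J ⊆ I := hJI ▸ Set.inter_subset_left
    have hred : reduct P1 J = reduct P1 I := by
      rw [← hJI, reduct_restrict]
    rw [reduct_union, reduct_facts, isModel_union] at hIm
    obtain ⟨hI2, hIf⟩ := hIm
    constructor
    · rw [reduct_union, isModel_union]
      constructor
      · rintro r' ⟨r, hr, hn, rfl⟩ ⟨hp, -⟩
        have hpJ : r.pbody ⊆ J := by
          intro a ha
          exact hJI ▸ (⟨hp ha, (atoms_sub hr).2.1 ha⟩ : a ∈ I ∩ A1)
        have hr' : (Rule.mk r.head r.pbody ∅) ∈ reduct P1 J := by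
          rw [hred]; exact ⟨r, hr, hn, rfl⟩
        exact hJsubI (hJm _ hr' ⟨hpJ, Set.empty_inter J⟩)
      · rintro r' hr' hcond
        exact hI2 r' hr' hcond
    · intro K hK
      rw [reduct_union, isModel_union] at hK
      obtain ⟨hK1, hK2⟩ := hK
      have hJK : J ⊆ K := hJmin K (hred ▸ hK1)
      have hKf : isModel K (facts J) := by
        rintro r ⟨a, ha, rfl⟩ -
        exact hJK ha
      apply hImin K
      rw [reduct_union, reduct_facts, isModel_union]
      exact ⟨hK2, hKf⟩
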